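/- Let p be an odd prime, let 𝒢 be the GGS-group with constant defining vector (1,...,1), and let K be the normal closure in 𝒢 of the conjugates (b a^{-1})^{a^i} for 0 ≤ i ≤ p-1. Then the commutator subgroup K' is contained in st_{Aut T}(1), ψ(K') is a subdirect product of K × ... × K (p factors), i.e. ψ(K') ≤ K × ... × K and each of the p coordinate projections of ψ(K') is all of K; moreover ψ(K'') contains γ₃(K) × ... × γ₃(K), where γ₃(K) is the third term of the lower central series of K. -/

import Mathlib

open List

/-- The automorphism group of the `p`-adic rooted tree: vertices are finite words
over the alphabet `ZMod p` (the letter `i ∈ {1,…,p-1}` is `i` and the letter `p` is `0`),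
and automorphisms are the permutations of the vertex set preserving word length and
the prefix relation. -/
def AutT (p : ℕ) : Subgroup (Equiv.Perm (List (ZMod p))) where
  carrier := {σ | (∀ v, (σ v).length = v.length) ∧
      ∀ u v : List (ZMod p), u <+: v → σ u <+: σ v}
  one_mem' := ⟨fun _ => rfl, fun _ _ h => h⟩
  mul_mem' := by
    rintro σ τ ⟨hσ1, hσ2⟩ ⟨hτ1, hτ2⟩
    refine ⟨fun v => ?_, fun u v h => ?_⟩
    · simp only [Equiv.Perm.mul_apply, hσ1, hτ1]
    · simpa only [Equiv.Perm.mul_apply] using hσ2 _ _ (hτ2 _ _ h)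
  inv_mem' := by
    rintro σ ⟨h1, h2⟩
    have hlen : ∀ v, (σ⁻¹ v).length = v.length := by
      intro v
      have := h1 (σ⁻¹ v)
      rw [show σ (σ⁻¹ v) = v from Equiv.apply_symm_apply σ v] at this
      exact this.symm
    refine ⟨hlen, fun u v huv => ?_⟩
    have hle : u.length ≤ (σ⁻¹ v).length := by
      rw [hlen]; exact huv.length_le
    have htake : (σ⁻¹ v).take u.length <+: σ⁻¹ v := List.take_prefix _ _
    have h3 : σ ((σ⁻¹ v).take u.length) <+: v := by
      have := h2 _ _ htake
      rwa [show σ (σ⁻¹ v) = v from Equiv.apply_symm_apply σ v] at this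
    have hlen2 : (σ ((σ⁻¹ v).take u.length)).length = u.length := by
      rw [h1, List.length_take]
      omega
    have heq : σ ((σ⁻¹ v).take u.length) = u := by
      refine List.IsPrefix.eq_of_length ?_ (by rw [hlen2])
      exact List.prefix_of_prefix_length_le h3 huv (by rw [hlen2])
    have h4 : σ⁻¹ u = (σ⁻¹ v).take u.length := by
      conv_lhs => rw [← heq]
      exact Equiv.symm_apply_apply _ _
    rw [h4]; exact htake

lemma mem_AutT_iff {p : ℕ} {σ : Equiv.Perm (List (ZMod p))} :
    σ ∈ AutT p ↔ (∀ v, (σ v).length = v.length) ∧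
      ∀ u v : List (ZMod p), u <+: v → σ u <+: σ v := Iff.rfl

lemma autT_apply_append (p : ℕ) (f : Equiv.Perm (List (ZMod p))) (hf : f ∈ AutT p)
    (u v : List (ZMod p)) : f (u ++ v) = f u ++ (f (u ++ v)).drop u.length := by
  rw [mem_AutT_iff] at hf
  have hpre : f u <+: f (u ++ v) := hf.2 u (u ++ v) ⟨v, rfl⟩
  have := List.prefix_iff_eq_append.mp hpre
  rw [hf.1 u] at this
  exact this.symm

/-- The section (state) of a tree automorphism at the vertex `u`, as a permutation of
the subtree rooted at `u` (identified with the whole tree). -/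
def secEquiv (p : ℕ) (f : ↥(AutT p)) (u : List (ZMod p)) : Equiv.Perm (List (ZMod p)) where
  toFun v := ((f : Equiv.Perm (List (ZMod p))) (u ++ v)).drop u.length
  invFun v := (((f⁻¹ : ↥(AutT p)) : Equiv.Perm (List (ZMod p)))
      (((f : Equiv.Perm (List (ZMod p))) u) ++ v)).drop u.length
  left_inv v := by
    dsimp only
    have key := autT_apply_append p (f : Equiv.Perm (List (ZMod p))) f.2 u v
    rw [← key]
    have h1 : ((f⁻¹ : ↥(AutT p)) : Equiv.Perm (List (ZMod p)))
        ((f : Equiv.Perm (List (ZMod p))) (u ++ v)) = u ++ v := by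
      rw [InvMemClass.coe_inv]
      exact Equiv.symm_apply_apply _ _
    rw [h1, List.drop_left]
  right_inv v := by
    dsimp only
    have hg := (f⁻¹ : ↥(AutT p)).2
    rw [mem_AutT_iff] at hg
    have h1 : ((f⁻¹ : ↥(AutT p)) : Equiv.Perm (List (ZMod p)))
        ((f : Equiv.Perm (List (ZMod p))) u) = u := by
      rw [InvMemClass.coe_inv]
      exact Equiv.symm_apply_apply _ _
    have hpre : u <+: ((f⁻¹ : ↥(AutT p)) : Equiv.Perm (List (ZMod p)))
        (((f : Equiv.Perm (List (ZMod p))) u) ++ v) := by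
      have := hg.2 ((f : Equiv.Perm (List (ZMod p))) u)
        (((f : Equiv.Perm (List (ZMod p))) u) ++ v) ⟨v, rfl⟩
      rwa [h1] at this
    have hw := List.prefix_iff_eq_append.mp hpre
    rw [hw]
    have h2 : (f : Equiv.Perm (List (ZMod p)))
        (((f⁻¹ : ↥(AutT p)) : Equiv.Perm (List (ZMod p)))
          (((f : Equiv.Perm (List (ZMod p))) u) ++ v))
        = ((f : Equiv.Perm (List (ZMod p))) u) ++ v := by
      rw [InvMemClass.coe_inv]
      exact Equiv.apply_symm_apply _ _
    rw [h2]
    have hlu : ((f : Equiv.Perm (List (ZMod p))) u).length = u.length :=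
      ((mem_AutT_iff).mp f.2).1 u
    rw [← hlu, List.drop_left]

lemma secEquiv_mem (p : ℕ) (f : ↥(AutT p)) (u : List (ZMod p)) :
    secEquiv p f u ∈ AutT p := by
  rw [mem_AutT_iff]
  obtain ⟨h1, h2⟩ := (mem_AutT_iff).mp f.2
  constructor
  · intro v
    show (((f : Equiv.Perm (List (ZMod p))) (u ++ v)).drop u.length).length = v.length
    rw [List.length_drop, h1, List.length_append]
    omega
  · intro v w hvw
    show ((f : Equiv.Perm (List (ZMod p))) (u ++ v)).drop u.length <+:
      ((f : Equiv.Perm (List (ZMod p))) (u ++ w)).drop u.length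
    have hp : (f : Equiv.Perm (List (ZMod p))) (u ++ v) <+:
        (f : Equiv.Perm (List (ZMod p))) (u ++ w) := by
      apply h2
      obtain ⟨t, rfl⟩ := hvw
      exact ⟨t, by rw [List.append_assoc]⟩
    obtain ⟨t, ht⟩ := hp
    have hle : u.length ≤ ((f : Equiv.Perm (List (ZMod p))) (u ++ v)).length := by
      rw [h1, List.length_append]; omega
    exact ⟨t, by rw [← List.drop_append_of_le_length hle, ht]⟩

/-- `sectionAt p f u = φ_u(f)`, the section of `f` at vertex `u`, as a tree automorphism. -/
def sectionAt (p : ℕ) (f : ↥(AutT p)) (u : List (ZMod p)) : ↥(AutT p) :=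
  ⟨secEquiv p f u, secEquiv_mem p f u⟩

/-- Add `k` to the first letter of a word (identity on the empty word). -/
def addFirst (p : ℕ) (k : ZMod p) : List (ZMod p) → List (ZMod p)
  | [] => []
  | x :: v => (x + k) :: v

lemma addFirst_addFirst (p : ℕ) (k l : ZMod p) (v : List (ZMod p)) :
    addFirst p k (addFirst p l v) = addFirst p (l + k) v := by
  cases v with
  | nil => rfl
  | cons x w => show (x + l + k) :: w = (x + (l + k)) :: w; rw [add_assoc]

lemma addFirst_zero (p : ℕ) (v : List (ZMod p)) : addFirst p 0 v = v := by
  cases v with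
  | nil => rfl
  | cons x w => show (x + 0) :: w = x :: w; rw [add_zero]

lemma addFirst_length (p : ℕ) (k : ZMod p) (v : List (ZMod p)) :
    (addFirst p k v).length = v.length := by
  cases v <;> rfl

/-- The rooted automorphism corresponding to the `p`-cycle `(1 2 ⋯ p)`:
it adds `1` to the first letter of every nonempty word. -/
def aPerm (p : ℕ) : Equiv.Perm (List (ZMod p)) where
  toFun := addFirst p 1
  invFun := addFirst p (-1)
  left_inv v := by rw [addFirst_addFirst, add_neg_cancel, addFirst_zero]
  right_inv v := by rw [addFirst_addFirst, neg_add_cancel, addFirst_zero]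

lemma addFirst_prefix (p : ℕ) (k : ZMod p) (u t : List (ZMod p)) :
    addFirst p k u <+: addFirst p k (u ++ t) := by
  cases u with
  | nil => exact List.nil_prefix
  | cons x w => exact ⟨t, rfl⟩

lemma aPerm_mem (p : ℕ) : aPerm p ∈ AutT p := by
  rw [mem_AutT_iff]
  refine ⟨fun v => addFirst_length p 1 v, ?_⟩
  rintro u v ⟨t, rfl⟩
  exact addFirst_prefix p 1 u t

/-- The rooted generator `a` of a GGS-group. -/
def aA (p : ℕ) : ↥(AutT p) := ⟨aPerm p, aPerm_mem p⟩

/-- The underlying function of the directed automorphism `b` with defining vector `e`. -/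
def bFun (p : ℕ) [NeZero p] (e : Fin (p - 1) → ZMod p) : List (ZMod p) → List (ZMod p)
  | [] => []
  | x :: v =>
    if h : x.val = 0 then x :: bFun p e v
    else x :: addFirst p (e ⟨x.val - 1, by have := ZMod.val_lt x; omega⟩) v

lemma bFun_cons (p : ℕ) [NeZero p] (e : Fin (p - 1) → ZMod p) (x : ZMod p)
    (v : List (ZMod p)) :
    bFun p e (x :: v) = if h : x.val = 0 then x :: bFun p e v
      else x :: addFirst p (e ⟨x.val - 1, by have := ZMod.val_lt x; omega⟩) v := rfl

lemma bFun_bFun (p : ℕ) [NeZero p] (e f : Fin (p - 1) → ZMod p)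
    (h : ∀ j, e j + f j = 0) (v : List (ZMod p)) : bFun p f (bFun p e v) = v := by
  induction v with
  | nil => rfl
  | cons x w ih =>
    by_cases hx : x.val = 0
    · rw [bFun_cons, dif_pos hx, bFun_cons, dif_pos hx, ih]
    · rw [bFun_cons, dif_neg hx, bFun_cons, dif_neg hx, addFirst_addFirst, h, addFirst_zero]

/-- The directed automorphism `b` with defining vector `e`, as a permutation:
`ψ(b) = (a^{e_1}, …, a^{e_{p-1}}, b)`. -/
def bPerm (p : ℕ) [NeZero p] (e : Fin (p - 1) → ZMod p) : Equiv.Perm (List (ZMod p)) where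
  toFun := bFun p e
  invFun := bFun p (fun j => -e j)
  left_inv v := bFun_bFun p e _ (fun j => add_neg_cancel _) v
  right_inv v := bFun_bFun p _ e (fun j => neg_add_cancel _) v

lemma bFun_length (p : ℕ) [NeZero p] (e : Fin (p - 1) → ZMod p) (v : List (ZMod p)) :
    (bFun p e v).length = v.length := by
  induction v with
  | nil => rfl
  | cons x w ih =>
    by_cases hx : x.val = 0
    · rw [bFun_cons, dif_pos hx]; simpa using ih
    · rw [bFun_cons, dif_neg hx]; simp [addFirst_length]

lemma bPerm_mem (p : ℕ) [NeZero p] (e : Fin (p - 1) → ZMod p) : bPerm p e ∈ AutT p := by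
  rw [mem_AutT_iff]
  refine ⟨fun v => bFun_length p e v, ?_⟩
  rintro u v ⟨t, rfl⟩
  show bFun p e u <+: bFun p e (u ++ t)
  induction u with
  | nil => exact List.nil_prefix
  | cons x w ih =>
    by_cases hx : x.val = 0
    · rw [List.cons_append, bFun_cons, dif_pos hx, bFun_cons, dif_pos hx]
      exact List.cons_prefix_cons.mpr ⟨rfl, ih⟩
    · rw [List.cons_append, bFun_cons, dif_neg hx, bFun_cons, dif_neg hx]
      exact List.cons_prefix_cons.mpr ⟨rfl, addFirst_prefix p _ w t⟩

/-- The directed generator `b` of the GGS-group with defining vector `e`. -/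
def bA (p : ℕ) [NeZero p] (e : Fin (p - 1) → ZMod p) : ↥(AutT p) :=
  ⟨bPerm p e, bPerm_mem p e⟩

/-- The GGS-group `G = ⟨a, b⟩ ≤ Aut T` with defining vector `e`. -/
def GGS (p : ℕ) [NeZero p] (e : Fin (p - 1) → ZMod p) : Subgroup ↥(AutT p) :=
  Subgroup.closure {aA p, bA p e}

lemma aA_mem_GGS (p : ℕ) [NeZero p] (e : Fin (p - 1) → ZMod p) : aA p ∈ GGS p e :=
  Subgroup.subset_closure (Set.mem_insert _ _)

lemma bA_mem_GGS (p : ℕ) [NeZero p] (e : Fin (p - 1) → ZMod p) : bA p e ∈ GGS p e :=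
  Subgroup.subset_closure (Set.mem_insert_of_mem _ rfl)

/-- `a^n` for an exponent `n ∈ F_p`. -/
def aZ (p : ℕ) (n : ZMod p) : ↥(AutT p) := aA p ^ n.val

/-- `b^m` for an exponent `m ∈ F_p`. -/
def bZ (p : ℕ) [NeZero p] (e : Fin (p - 1) → ZMod p) (m : ZMod p) : ↥(AutT p) :=
  bA p e ^ m.val

/-- The length `|g|` of an element of the GGS-group with defining vector `e`:
the minimal number `m` of `b`-syllables in an expression
`g = a^{α_1} b^{β_1} a^{α_2} ⋯ b^{β_m} a^{α_{m+1}}`. -/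
noncomputable def glen (p : ℕ) [NeZero p] (e : Fin (p - 1) → ZMod p) (g : ↥(AutT p)) : ℕ :=
  sInf {m : ℕ | ∃ (α : Fin (m + 1) → ZMod p) (β : Fin m → ZMod p),
    g = aZ p (α 0) * (List.ofFn fun i : Fin m => bZ p e (β i) * aZ p (α i.succ)).prod}

/-- An element of `Aut T` fixes all first-level vertices, i.e. lies in `st(1)`. -/
def FixesLevelOne (p : ℕ) (f : ↥(AutT p)) : Prop :=
  ∀ x : ZMod p, (f : Equiv.Perm (List (ZMod p))) [x] = [x]

/-- The constant defining vector `(1, …, 1)`, giving the GGS-group `𝒢`. -/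
def constVec (p : ℕ) : Fin (p - 1) → ZMod p := fun _ => 1

/-- `K`: the normal closure in `𝒢` of the conjugates `(b a⁻¹)^{a^i}`, `0 ≤ i ≤ p-1`. -/
def Kgrp (p : ℕ) [NeZero p] : Subgroup ↥(AutT p) :=
  Subgroup.closure {x : ↥(AutT p) | ∃ i : ℕ, i ≤ p - 1 ∧ ∃ g ∈ GGS p (constVec p),
    x = g⁻¹ * ((aA p ^ i)⁻¹ * (bA p (constVec p) * (aA p)⁻¹) * aA p ^ i) * g}

/-! ### Auxiliary infrastructure -/

open Subgroup
open scoped commutatorElement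

lemma perm_apply_inv_self {α : Type*} (σ : Equiv.Perm α) (y : α) : σ (σ⁻¹ y) = y :=
  Equiv.apply_symm_apply σ y

lemma perm_inv_apply_self {α : Type*} (σ : Equiv.Perm α) (y : α) : σ⁻¹ (σ y) = y :=
  Equiv.symm_apply_apply σ y

lemma autT_nil {p : ℕ} (f : ↥(AutT p)) : (f : Equiv.Perm (List (ZMod p))) [] = [] :=
  List.length_eq_zero_iff.mp ((mem_AutT_iff.mp f.2).1 [])

/-- The subgroup of automorphisms acting as `x ↦ x + k` on the first letter,
with a section at each first-level vertex. -/
def Sg (p : ℕ) : Subgroup ↥(AutT p) where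
  carrier := {f | ∃ k : ZMod p, ∃ s : ZMod p → ↥(AutT p), ∀ x v,
      (f : Equiv.Perm (List (ZMod p))) (x :: v)
        = (x + k) :: ((s x : Equiv.Perm (List (ZMod p))) v)}
  one_mem' := ⟨0, fun _ => 1, by intro x v; simp⟩
  mul_mem' := by
    rintro f g ⟨kf, sf, hf⟩ ⟨kg, sg, hg⟩
    refine ⟨kg + kf, fun x => sf (x + kg) * sg x, fun x v => ?_⟩
    rw [Subgroup.coe_mul, Equiv.Perm.mul_apply, hg, hf, Subgroup.coe_mul,
      Equiv.Perm.mul_apply, add_assoc]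
  inv_mem' := by
    rintro f ⟨k, s, hs⟩
    refine ⟨-k, fun x => (s (x + -k))⁻¹, fun x v => ?_⟩
    have h : (f : Equiv.Perm (List (ZMod p)))
        ((x + -k) :: ((((s (x + -k))⁻¹ : ↥(AutT p)) : Equiv.Perm (List (ZMod p))) v))
        = x :: v := by
      rw [hs, InvMemClass.coe_inv, perm_apply_inv_self, neg_add_cancel_right]
    rw [InvMemClass.coe_inv, ← h, perm_inv_apply_self]

/-- The amount by which `f` translates the first letter. -/
def kOf {p : ℕ} (f : ↥(AutT p)) : ZMod p := ((f : Equiv.Perm (List (ZMod p))) [0]).headI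

/-- The section of `f` at the first-level vertex `x`. -/
def secA {p : ℕ} (f : ↥(AutT p)) (x : ZMod p) : ↥(AutT p) := sectionAt p f [x]

lemma secA_apply {p : ℕ} (f : ↥(AutT p)) (x : ZMod p) (v : List (ZMod p)) :
    (secA f x : Equiv.Perm (List (ZMod p))) v
      = ((f : Equiv.Perm (List (ZMod p))) (x :: v)).drop 1 := rfl

lemma sg_wit {p : ℕ} {f : ↥(AutT p)} {k : ZMod p} {s : ZMod p → ↥(AutT p)}
    (hs : ∀ x v, (f : Equiv.Perm (List (ZMod p))) (x :: v)
        = (x + k) :: ((s x : Equiv.Perm (List (ZMod p))) v)) :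
    f ∈ Sg p ∧ kOf f = k ∧ ∀ x, secA f x = s x := by
  refine ⟨⟨k, s, hs⟩, ?_, ?_⟩
  · have h0 := hs 0 []
    rw [autT_nil (s 0)] at h0
    show ((f : Equiv.Perm (List (ZMod p))) [0]).headI = k
    rw [h0]; simp
  · intro x
    refine Subtype.ext (Equiv.ext fun v => ?_)
    rw [secA_apply, hs x v]
    rfl

lemma sg_spec {p : ℕ} {f : ↥(AutT p)} (hf : f ∈ Sg p) (x : ZMod p) (v : List (ZMod p)) :
    (f : Equiv.Perm (List (ZMod p))) (x :: v)
      = (x + kOf f) :: (secA f x : Equiv.Perm (List (ZMod p))) v := by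
  obtain ⟨k, s, hs⟩ := hf
  obtain ⟨-, hk, hsec⟩ := sg_wit hs
  rw [hk, hsec x]
  exact hs x v

lemma kOf_one {p : ℕ} : kOf (1 : ↥(AutT p)) = 0 := by
  show (((1 : ↥(AutT p)) : Equiv.Perm (List (ZMod p))) [0]).headI = 0
  simp

lemma secA_one {p : ℕ} (x : ZMod p) : secA (1 : ↥(AutT p)) x = 1 := by
  refine Subtype.ext (Equiv.ext fun v => ?_)
  rw [secA_apply]
  simp

lemma kOf_mul {p : ℕ} {f g : ↥(AutT p)} (hf : f ∈ Sg p) (hg : g ∈ Sg p) :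
    kOf (f * g) = kOf f + kOf g := by
  show (((f * g : ↥(AutT p)) : Equiv.Perm (List (ZMod p))) [0]).headI = _
  rw [Subgroup.coe_mul, Equiv.Perm.mul_apply]
  have h1 : (g : Equiv.Perm (List (ZMod p))) [(0 : ZMod p)] = [0 + kOf g] := by
    have := sg_spec hg 0 []
    rwa [autT_nil (secA g 0)] at this
  rw [h1, sg_spec hf (0 + kOf g) [], autT_nil (secA f (0 + kOf g))]
  show 0 + kOf g + kOf f = kOf f + kOf g
  ring

lemma secA_mul {p : ℕ} {f g : ↥(AutT p)} (hf : f ∈ Sg p) (hg : g ∈ Sg p) (x : ZMod p) :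
    secA (f * g) x = secA f (x + kOf g) * secA g x := by
  refine Subtype.ext (Equiv.ext fun v => ?_)
  rw [secA_apply, Subgroup.coe_mul, Equiv.Perm.mul_apply, sg_spec hg x v,
    sg_spec hf (x + kOf g) _, Subgroup.coe_mul, Equiv.Perm.mul_apply]
  rfl

lemma kOf_inv {p : ℕ} {f : ↥(AutT p)} (hf : f ∈ Sg p) : kOf f⁻¹ = -kOf f := by
  have h := kOf_mul hf ((Sg p).inv_mem hf)
  rw [mul_inv_cancel, kOf_one] at h
  exact eq_neg_of_add_eq_zero_right h.symm

lemma secA_inv {p : ℕ} {f : ↥(AutT p)} (hf : f ∈ Sg p) (x : ZMod p) :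
    secA f⁻¹ x = (secA f (x - kOf f))⁻¹ := by
  have h := secA_mul hf ((Sg p).inv_mem hf) x
  rw [mul_inv_cancel, secA_one, kOf_inv hf] at h
  have h2 := inv_eq_of_mul_eq_one_right h.symm
  rw [sub_eq_add_neg]
  exact h2.symm

/-! ### Generators -/

lemma aA_facts (p : ℕ) :
    aA p ∈ Sg p ∧ kOf (aA p) = 1 ∧ ∀ x, secA (aA p) x = 1 :=
  sg_wit (fun x v => by simp [aA, aPerm, addFirst])

lemma aA_pow_apply (p : ℕ) (n : ℕ) (x : ZMod p) (v : List (ZMod p)) :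
    ((aA p ^ n : ↥(AutT p)) : Equiv.Perm (List (ZMod p))) (x :: v) = (x + (n : ZMod p)) :: v := by
  induction n generalizing x with
  | zero => simp
  | succ m ih =>
    rw [pow_succ, Subgroup.coe_mul, Equiv.Perm.mul_apply]
    have ha : ((aA p : ↥(AutT p)) : Equiv.Perm (List (ZMod p))) (x :: v) = (x + 1) :: v := by
      simp [aA, aPerm, addFirst]
    rw [ha, ih (x + 1)]
    congr 1
    push_cast
    ring

lemma aA_pow_facts (p : ℕ) (n : ℕ) :
    aA p ^ n ∈ Sg p ∧ kOf (aA p ^ n) = (n : ZMod p) ∧ ∀ x, secA (aA p ^ n) x = 1 :=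
  sg_wit (fun x v => by rw [aA_pow_apply]; simp)

lemma bA_facts (p : ℕ) [NeZero p] :
    bA p (constVec p) ∈ Sg p ∧ kOf (bA p (constVec p)) = 0 ∧
      ∀ x, secA (bA p (constVec p)) x = if x = 0 then bA p (constVec p) else aA p := by
  refine sg_wit (fun x v => ?_)
  show bFun p (constVec p) (x :: v) = _
  rw [bFun_cons]
  by_cases hx : x = 0
  · have hv : x.val = 0 := by simp [hx]
    rw [dif_pos hv, if_pos hx, add_zero]
    rfl
  · have hv : ¬ x.val = 0 := fun h => hx ((ZMod.val_eq_zero x).mp h)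
    rw [dif_neg hv, if_neg hx, add_zero]
    show _ = x :: addFirst p 1 v
    rfl

/-- `c = b a⁻¹`, the generator of `K`. -/
def cElt (p : ℕ) [NeZero p] : ↥(AutT p) := bA p (constVec p) * (aA p)⁻¹

lemma c_Sg (p : ℕ) [NeZero p] : cElt p ∈ Sg p :=
  (Sg p).mul_mem (bA_facts p).1 ((Sg p).inv_mem (aA_facts p).1)

lemma kOf_c (p : ℕ) [NeZero p] : kOf (cElt p) = -1 := by
  rw [cElt, kOf_mul (bA_facts p).1 ((Sg p).inv_mem (aA_facts p).1),
    kOf_inv (aA_facts p).1, (bA_facts p).2.1, (aA_facts p).2.1, zero_add]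

lemma sec_c (p : ℕ) [NeZero p] (x : ZMod p) :
    secA (cElt p) x = if x = 1 then bA p (constVec p) else aA p := by
  rw [cElt, secA_mul (bA_facts p).1 ((Sg p).inv_mem (aA_facts p).1),
    kOf_inv (aA_facts p).1, (aA_facts p).2.1, secA_inv (aA_facts p).1,
    (aA_facts p).2.2, inv_one, mul_one, (bA_facts p).2.2]
  simp only [add_neg_eq_zero]

/-- conjugation by a power of `a` shifts the sections. -/
lemma conjA_apply {p : ℕ} (n : ℕ) {f : ↥(AutT p)} (hf : f ∈ Sg p) (x : ZMod p)
    (v : List (ZMod p)) :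
    (((aA p ^ n)⁻¹ * f * aA p ^ n : ↥(AutT p)) : Equiv.Perm (List (ZMod p))) (x :: v)
      = (x + kOf f) :: (secA f (x + n) : Equiv.Perm (List (ZMod p))) v := by
  obtain ⟨haSg, hak, has⟩ := aA_pow_facts p n
  have hanv : ∀ (y : ZMod p) (w : List (ZMod p)),
      ((aA p ^ n : ↥(AutT p)) : Equiv.Perm (List (ZMod p))) (y :: w) = (y + n) :: w := by
    intro y w
    rw [sg_spec haSg, hak]
    have := has y
    rw [this]
    simp
  have hainv : ∀ (y : ZMod p) (w : List (ZMod p)),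
      (((aA p ^ n)⁻¹ : ↥(AutT p)) : Equiv.Perm (List (ZMod p))) (y :: w) = (y - n) :: w := by
    intro y w
    have h : ((aA p ^ n : ↥(AutT p)) : Equiv.Perm (List (ZMod p))) ((y - n) :: w) = y :: w := by
      rw [hanv, sub_add_cancel]
    rw [InvMemClass.coe_inv, ← h, perm_inv_apply_self]
  rw [Subgroup.coe_mul, Subgroup.coe_mul, Equiv.Perm.mul_apply, Equiv.Perm.mul_apply,
    hanv, sg_spec hf (x + n) v, hainv]
  congr 1
  ring

lemma conjA_facts {p : ℕ} (n : ℕ) {f : ↥(AutT p)} (hf : f ∈ Sg p) :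
    (aA p ^ n)⁻¹ * f * aA p ^ n ∈ Sg p ∧ kOf ((aA p ^ n)⁻¹ * f * aA p ^ n) = kOf f ∧
      ∀ x, secA ((aA p ^ n)⁻¹ * f * aA p ^ n) x = secA f (x + n) :=
  sg_wit (fun x v => conjA_apply n hf x v)

/-- Sections of a commutator. -/
lemma secA_commutator {p : ℕ} {k l : ↥(AutT p)} (hk : k ∈ Sg p) (hl : l ∈ Sg p) (x : ZMod p) :
    secA ⁅k, l⁆ x = secA k (x - kOf k) * secA l (x - kOf k - kOf l) *
      (secA k (x - kOf k - kOf l))⁻¹ * (secA l (x - kOf l))⁻¹ := by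
  have hki := (Sg p).inv_mem hk
  have hli := (Sg p).inv_mem hl
  have h1 : ⁅k, l⁆ = k * l * k⁻¹ * l⁻¹ := commutatorElement_def k l
  rw [h1, secA_mul ((Sg p).mul_mem ((Sg p).mul_mem hk hl) hki) hli,
    secA_mul ((Sg p).mul_mem hk hl) hki, secA_mul hk hl,
    kOf_inv hl, kOf_inv hk, secA_inv hk, secA_inv hl]
  have e1 : x + -kOf l + -kOf k + kOf l = x - kOf k := by ring
  have e2 : x + -kOf l + -kOf k = x - kOf k - kOf l := by ring
  have e3 : x + -kOf l - kOf k = x - kOf k - kOf l := by ring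
  rw [e1, e2, e3]

/-! ### Group-theoretic infrastructure -/

lemma G_le_Sg (p : ℕ) [NeZero p] : GGS p (constVec p) ≤ Sg p := by
  refine (Subgroup.closure_le _).mpr ?_
  rintro x hx
  simp only [Set.mem_insert_iff, Set.mem_singleton_iff] at hx
  rcases hx with rfl | rfl
  · exact (aA_facts p).1
  · exact (bA_facts p).1

lemma c_mem_K (p : ℕ) [NeZero p] : cElt p ∈ Kgrp p := by
  refine Subgroup.subset_closure ⟨0, Nat.zero_le _, 1, one_mem _, ?_⟩
  rw [cElt]; group

lemma normK (p : ℕ) [NeZero p] {g k : ↥(AutT p)} (hg : g ∈ GGS p (constVec p))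
    (hk : k ∈ Kgrp p) : g⁻¹ * k * g ∈ Kgrp p := by
  induction hk using Subgroup.closure_induction with
  | mem x hx =>
    obtain ⟨i, hi, h, hh, rfl⟩ := hx
    refine Subgroup.subset_closure ⟨i, hi, h * g, mul_mem hh hg, ?_⟩
    group
  | one => simpa using one_mem _
  | mul x y _ _ hx hy =>
    have h : g⁻¹ * (x * y) * g = (g⁻¹ * x * g) * (g⁻¹ * y * g) := by group
    rw [h]; exact mul_mem hx hy
  | inv x _ hx =>
    have h : g⁻¹ * x⁻¹ * g = (g⁻¹ * x * g)⁻¹ := by group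
    rw [h]; exact inv_mem hx

lemma K_le_G (p : ℕ) [NeZero p] : Kgrp p ≤ GGS p (constVec p) := by
  refine (Subgroup.closure_le _).mpr ?_
  rintro x ⟨i, hi, g, hg, rfl⟩
  exact mul_mem (mul_mem (inv_mem hg) (mul_mem (mul_mem (inv_mem (pow_mem (aA_mem_GGS p _) i))
    (mul_mem (bA_mem_GGS p _) (inv_mem (aA_mem_GGS p _)))) (pow_mem (aA_mem_GGS p _) i))) hg

lemma aA_pow_p (p : ℕ) [NeZero p] : aA p ^ p = 1 := by
  refine Subtype.ext (Equiv.ext fun w => ?_)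
  cases w with
  | nil => rw [autT_nil]; exact (autT_nil 1).symm
  | cons x v =>
    rw [aA_pow_apply, ZMod.natCast_self, add_zero]
    rfl

lemma ainvb_mem_K (p : ℕ) [Fact p.Prime] : (aA p)⁻¹ * bA p (constVec p) ∈ Kgrp p := by
  have h1 : 1 ≤ p - 1 := by have := (Fact.out : p.Prime).two_le; omega
  refine Subgroup.subset_closure ⟨1, h1, 1, one_mem _, ?_⟩
  group

lemma L1 (p : ℕ) [Fact p.Prime] {g : ↥(AutT p)} (hg : g ∈ GGS p (constVec p)) :
    ∃ n : ℕ, ∃ k ∈ Kgrp p, g = aA p ^ n * k := by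
  induction hg using Subgroup.closure_induction with
  | mem x hx =>
    simp only [Set.mem_insert_iff, Set.mem_singleton_iff] at hx
    rcases hx with rfl | rfl
    · exact ⟨1, 1, one_mem _, by group⟩
    · exact ⟨1, (aA p)⁻¹ * bA p (constVec p), ainvb_mem_K p, by group⟩
  | one => exact ⟨0, 1, one_mem _, by group⟩
  | mul x y hx hy ihx ihy =>
    obtain ⟨n, k, hk, rfl⟩ := ihx
    obtain ⟨m, l, hl, rfl⟩ := ihy
    refine ⟨n + m, ((aA p ^ m)⁻¹ * k * aA p ^ m) * l,
      mul_mem (normK p (pow_mem (aA_mem_GGS p _) m) hk) hl, ?_⟩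
    rw [pow_add]; group
  | inv x hx ihx =>
    obtain ⟨n, k, hk, rfl⟩ := ihx
    have hnm : n + n * (p - 1) = n * p := by
      have h2 : 1 + (p - 1) = p := by have := (Fact.out : p.Prime).two_le; omega
      calc n + n * (p - 1) = n * (1 + (p - 1)) := by ring
      _ = n * p := by rw [h2]
    have hmn : aA p ^ n * aA p ^ (n * (p - 1)) = 1 := by
      rw [← pow_add, hnm, mul_comm n p, pow_mul, aA_pow_p, one_pow]
    have hainv : (aA p ^ n)⁻¹ = aA p ^ (n * (p - 1)) := inv_eq_of_mul_eq_one_right hmn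
    refine ⟨n * (p - 1), (aA p ^ (n * (p - 1)))⁻¹ * k⁻¹ * aA p ^ (n * (p - 1)),
      normK p (pow_mem (aA_mem_GGS p _) _) (inv_mem hk), ?_⟩
    rw [mul_inv_rev, hainv]; group

lemma commGK (p : ℕ) [Fact p.Prime] {U V : ↥(AutT p)} (hU : U ∈ GGS p (constVec p))
    (hV : V ∈ GGS p (constVec p)) : U * V * U⁻¹ * V⁻¹ ∈ Kgrp p := by
  obtain ⟨n, k, hk, rfl⟩ := L1 p hU
  obtain ⟨m, l, hl, rfl⟩ := L1 p hV
  have h1 : aA p ^ n * k * (aA p ^ m * l)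
      = aA p ^ (n + m) * (((aA p ^ m)⁻¹ * k * aA p ^ m) * l) := by
    rw [pow_add]; group
  have h2 : aA p ^ m * l * (aA p ^ n * k)
      = aA p ^ (n + m) * (((aA p ^ n)⁻¹ * l * aA p ^ n) * k) := by
    rw [pow_add]; group
  have key : aA p ^ n * k * (aA p ^ m * l) * (aA p ^ n * k)⁻¹ * (aA p ^ m * l)⁻¹
      = (aA p ^ (n + m)) * ((((aA p ^ m)⁻¹ * k * aA p ^ m) * l)
        * ((((aA p ^ n)⁻¹ * l * aA p ^ n) * k))⁻¹) * (aA p ^ (n + m))⁻¹ := by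
    have h3 : aA p ^ n * k * (aA p ^ m * l) * (aA p ^ n * k)⁻¹ * (aA p ^ m * l)⁻¹
        = (aA p ^ n * k * (aA p ^ m * l)) * (aA p ^ m * l * (aA p ^ n * k))⁻¹ := by group
    rw [h3, h1, h2]; group
  rw [key]
  have hmem : (((aA p ^ m)⁻¹ * k * aA p ^ m) * l)
      * ((((aA p ^ n)⁻¹ * l * aA p ^ n) * k))⁻¹ ∈ Kgrp p :=
    mul_mem (mul_mem (normK p (pow_mem (aA_mem_GGS p _) m) hk) hl)
      (inv_mem (mul_mem (normK p (pow_mem (aA_mem_GGS p _) n) hl) hk))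
  have := normK p (inv_mem (pow_mem (aA_mem_GGS p _) (n + m))) hmem
  rwa [inv_inv] at this

/-- Sections of elements of `𝒢` lie in `𝒢`, with pairwise differences in `K`. -/
lemma secG_pairwise (p : ℕ) [Fact p.Prime] {g : ↥(AutT p)} (hg : g ∈ GGS p (constVec p)) :
    (∀ x, secA g x ∈ GGS p (constVec p)) ∧
      ∀ x y, (secA g x)⁻¹ * secA g y ∈ Kgrp p := by
  induction hg using Subgroup.closure_induction with
  | mem f hf =>
    simp only [Set.mem_insert_iff, Set.mem_singleton_iff] at hf
    rcases hf with rfl | rfl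
    · refine ⟨fun x => ?_, fun x y => ?_⟩
      · rw [(aA_facts p).2.2]; exact one_mem _
      · rw [(aA_facts p).2.2, (aA_facts p).2.2]; simpa using one_mem _
    · refine ⟨fun x => ?_, fun x y => ?_⟩
      · rw [(bA_facts p).2.2]
        split_ifs
        · exact bA_mem_GGS p _
        · exact aA_mem_GGS p _
      · rw [(bA_facts p).2.2, (bA_facts p).2.2]
        by_cases hx : x = 0 <;> by_cases hy : y = 0
        · rw [if_pos hx, if_pos hy]; simpa using one_mem _
        · rw [if_pos hx, if_neg hy]
          have := inv_mem (ainvb_mem_K p)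
          rwa [mul_inv_rev, inv_inv] at this
        · rw [if_neg hx, if_pos hy]; exact ainvb_mem_K p
        · rw [if_neg hx, if_neg hy]; simpa using one_mem _
  | one =>
    refine ⟨fun x => ?_, fun x y => ?_⟩
    · rw [secA_one]; exact one_mem _
    · rw [secA_one, secA_one]; simpa using one_mem _
  | mul f g hf hg ihf ihg =>
    have hfS := G_le_Sg p hf
    have hgS := G_le_Sg p hg
    refine ⟨fun x => ?_, fun x y => ?_⟩
    · rw [secA_mul hfS hgS]
      exact mul_mem (ihf.1 _) (ihg.1 _)
    · rw [secA_mul hfS hgS, secA_mul hfS hgS]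
      have key : (secA f (x + kOf g) * secA g x)⁻¹ * (secA f (y + kOf g) * secA g y)
          = ((secA g x)⁻¹ * ((secA f (x + kOf g))⁻¹ * secA f (y + kOf g)) * secA g x)
            * ((secA g x)⁻¹ * secA g y) := by group
      rw [key]
      exact mul_mem (normK p (ihg.1 x) (ihf.2 _ _)) (ihg.2 x y)
  | inv f hf ihf =>
    have hfS := G_le_Sg p hf
    refine ⟨fun x => ?_, fun x y => ?_⟩
    · rw [secA_inv hfS]
      exact inv_mem (ihf.1 _)
    · rw [secA_inv hfS, secA_inv hfS, inv_inv]
      have key : secA f (x - kOf f) * (secA f (y - kOf f))⁻¹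
          = (((secA f (x - kOf f))⁻¹)⁻¹
              * ((secA f (x - kOf f))⁻¹ * secA f (y - kOf f))⁻¹
              * (secA f (x - kOf f))⁻¹) := by group
      rw [key]
      exact normK p (inv_mem (ihf.1 _)) (inv_mem (ihf.2 _ _))

/-- Sections of commutators of `K`-elements lie in `K`. -/
lemma sec_commK (p : ℕ) [Fact p.Prime] {k l : ↥(AutT p)} (hk : k ∈ Kgrp p)
    (hl : l ∈ Kgrp p) (x : ZMod p) : secA ⁅k, l⁆ x ∈ Kgrp p := by
  have hkG := K_le_G p hk
  have hlG := K_le_G p hl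
  have hkS := G_le_Sg p hkG
  have hlS := G_le_Sg p hlG
  rw [secA_commutator hkS hlS]
  set U := secA k (x - kOf k) with hU
  set V := secA l (x - kOf k - kOf l) with hV
  set W := secA k (x - kOf k - kOf l) with hW
  set Z := secA l (x - kOf l) with hZ
  have key : U * V * W⁻¹ * Z⁻¹
      = ((U * V) * (U⁻¹ * W)⁻¹ * (U * V)⁻¹) * ((U * V * U⁻¹ * V⁻¹)
        * (V * (V⁻¹ * Z)⁻¹ * V⁻¹)) := by group
  rw [key]
  have hUG : U ∈ GGS p (constVec p) := (secG_pairwise p hkG).1 _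
  have hVG : V ∈ GGS p (constVec p) := (secG_pairwise p hlG).1 _
  have d1 : U⁻¹ * W ∈ Kgrp p := by
    rw [hU, hW]; exact (secG_pairwise p hkG).2 _ _
  have d2 : V⁻¹ * Z ∈ Kgrp p := by
    rw [hV, hZ]; exact (secG_pairwise p hlG).2 _ _
  have m1 : (U * V) * (U⁻¹ * W)⁻¹ * (U * V)⁻¹ ∈ Kgrp p := by
    have := normK p (inv_mem (mul_mem hUG hVG)) (inv_mem d1)
    rwa [inv_inv] at this
  have m3 : V * (V⁻¹ * Z)⁻¹ * V⁻¹ ∈ Kgrp p := by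
    have := normK p (inv_mem hVG) (inv_mem d2)
    rwa [inv_inv] at this
  exact mul_mem m1 (mul_mem (commGK p hUG hVG) m3)

/-- `K' ≤ st(1)` : commutators have trivial shift. -/
lemma K'_basic (p : ℕ) [Fact p.Prime] {g : ↥(AutT p)} (hg : g ∈ ⁅Kgrp p, Kgrp p⁆) :
    g ∈ Sg p ∧ kOf g = 0 := by
  let StF : Subgroup ↥(AutT p) :=
    { carrier := {f | f ∈ Sg p ∧ kOf f = 0}
      one_mem' := ⟨one_mem _, kOf_one⟩
      mul_mem' := by
        rintro f g ⟨hf, hkf⟩ ⟨hg, hkg⟩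
        exact ⟨mul_mem hf hg, by rw [kOf_mul hf hg, hkf, hkg, add_zero]⟩
      inv_mem' := by
        rintro f ⟨hf, hkf⟩
        exact ⟨inv_mem hf, by rw [kOf_inv hf, hkf, neg_zero]⟩ }
  have : ⁅Kgrp p, Kgrp p⁆ ≤ StF := by
    rw [Subgroup.commutator_le]
    intro k hk l hl
    have hkS := G_le_Sg p (K_le_G p hk)
    have hlS := G_le_Sg p (K_le_G p hl)
    have h1 : ⁅k, l⁆ = k * l * k⁻¹ * l⁻¹ := commutatorElement_def k l
    constructor
    · rw [h1]; exact mul_mem (mul_mem (mul_mem hkS hlS) (inv_mem hkS)) (inv_mem hlS)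
    · rw [h1, kOf_mul (mul_mem (mul_mem hkS hlS) (inv_mem hkS)) (inv_mem hlS),
        kOf_mul (mul_mem hkS hlS) (inv_mem hkS), kOf_mul hkS hlS,
        kOf_inv hkS, kOf_inv hlS]
      ring
  exact this hg

/-- Sections of `K'`-elements lie in `K`. -/
lemma secK' (p : ℕ) [Fact p.Prime] {g : ↥(AutT p)} (hg : g ∈ ⁅Kgrp p, Kgrp p⁆)
    (x : ZMod p) : secA g x ∈ Kgrp p := by
  let SecK : Subgroup ↥(AutT p) :=
    { carrier := {f | f ∈ Sg p ∧ ∀ x, secA f x ∈ Kgrp p}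
      one_mem' := ⟨one_mem _, fun x => by rw [secA_one]; exact one_mem _⟩
      mul_mem' := by
        rintro f g ⟨hf, hsf⟩ ⟨hg, hsg⟩
        exact ⟨mul_mem hf hg, fun x => by
          rw [secA_mul hf hg]; exact mul_mem (hsf _) (hsg _)⟩
      inv_mem' := by
        rintro f ⟨hf, hsf⟩
        exact ⟨inv_mem hf, fun x => by rw [secA_inv hf]; exact inv_mem (hsf _)⟩ }
  have : ⁅Kgrp p, Kgrp p⁆ ≤ SecK := by
    rw [Subgroup.commutator_le]
    intro k hk l hl
    have hkS := G_le_Sg p (K_le_G p hk)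
    have hlS := G_le_Sg p (K_le_G p hl)
    refine ⟨?_, fun x => sec_commK p hk hl x⟩
    rw [commutatorElement_def]
    exact mul_mem (mul_mem (mul_mem hkS hlS) (inv_mem hkS)) (inv_mem hlS)
  exact (this hg).2 x

/-! ### Concrete elements and their sections -/

lemma cElt_def (p : ℕ) [NeZero p] : cElt p = bA p (constVec p) * (aA p)⁻¹ := rfl

lemma zmodOneNeZero (p : ℕ) [Fact p.Prime] : (1 : ZMod p) ≠ 0 := by
  intro h
  rw [show (1 : ZMod p) = ((1 : ℕ) : ZMod p) by simp] at h
  have h1 := Nat.le_of_dvd one_pos ((ZMod.natCast_eq_zero_iff 1 p).mp h)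
  have h2 := (Fact.out : p.Prime).two_le
  omega

lemma zmodTwoNeZero (p : ℕ) [Fact p.Prime] (hodd : Odd p) : (2 : ZMod p) ≠ 0 := by
  intro h
  rw [show (2 : ZMod p) = ((2 : ℕ) : ZMod p) by simp] at h
  have h1 := Nat.le_of_dvd (by norm_num) ((ZMod.natCast_eq_zero_iff 2 p).mp h)
  have h2 := (Fact.out : p.Prime).two_le
  have h3 := Nat.odd_iff.mp hodd
  omega

/-- Conjugates of `c` by powers of `a`. -/
def cConj (p : ℕ) [NeZero p] (n : ℕ) : ↥(AutT p) := (aA p ^ n)⁻¹ * cElt p * aA p ^ n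

lemma cConj_mem_K (p : ℕ) [NeZero p] (n : ℕ) : cConj p n ∈ Kgrp p :=
  normK p (pow_mem (aA_mem_GGS p _) n) (c_mem_K p)

lemma cConj_facts (p : ℕ) [NeZero p] (n : ℕ) :
    cConj p n ∈ Sg p ∧ kOf (cConj p n) = -1 ∧
      ∀ x, secA (cConj p n) x = secA (cElt p) (x + n) := by
  obtain ⟨h1, h2, h3⟩ := conjA_facts n (c_Sg p)
  exact ⟨h1, by show kOf ((aA p ^ n)⁻¹ * cElt p * aA p ^ n) = -1; rw [h2, kOf_c], h3⟩

/-- `d = c (c^a)⁻¹`, with sections `(c, 1, …, 1, c⁻¹)`. -/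
def dElt (p : ℕ) [NeZero p] : ↥(AutT p) := cElt p * (cConj p 1)⁻¹

/-- `d₂ = (c^a) c⁻¹`, with sections `(c⁻¹, 1, …, 1, c)`. -/
def d2Elt (p : ℕ) [NeZero p] : ↥(AutT p) := cConj p 1 * (cElt p)⁻¹

lemma dElt_mem_K (p : ℕ) [NeZero p] : dElt p ∈ Kgrp p :=
  mul_mem (c_mem_K p) (inv_mem (cConj_mem_K p 1))

lemma d2Elt_mem_K (p : ℕ) [NeZero p] : d2Elt p ∈ Kgrp p :=
  mul_mem (cConj_mem_K p 1) (inv_mem (c_mem_K p))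

lemma dElt_Sg (p : ℕ) [NeZero p] : dElt p ∈ Sg p :=
  mul_mem (c_Sg p) (inv_mem (cConj_facts p 1).1)

lemma d2Elt_Sg (p : ℕ) [NeZero p] : d2Elt p ∈ Sg p :=
  mul_mem (cConj_facts p 1).1 (inv_mem (c_Sg p))

lemma kOf_d (p : ℕ) [NeZero p] : kOf (dElt p) = 0 := by
  rw [dElt, kOf_mul (c_Sg p) (inv_mem (cConj_facts p 1).1), kOf_inv (cConj_facts p 1).1,
    kOf_c, (cConj_facts p 1).2.1]
  ring

lemma kOf_d2 (p : ℕ) [NeZero p] : kOf (d2Elt p) = 0 := by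
  rw [d2Elt, kOf_mul (cConj_facts p 1).1 (inv_mem (c_Sg p)), kOf_inv (c_Sg p),
    kOf_c, (cConj_facts p 1).2.1]
  ring

lemma sec_d (p : ℕ) [Fact p.Prime] (hodd : Odd p) (y : ZMod p) :
    secA (dElt p) y = if y = 0 then cElt p else if y = -1 then (cElt p)⁻¹ else 1 := by
  have h10 := zmodOneNeZero p
  have hm10 : (0 : ZMod p) ≠ -1 := fun h => h10 (by
    have := congrArg (fun z => z + 1) h
    simpa using this.symm)
  rw [dElt, secA_mul (c_Sg p) (inv_mem (cConj_facts p 1).1), kOf_inv (cConj_facts p 1).1,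
    (cConj_facts p 1).2.1, secA_inv (cConj_facts p 1).1, (cConj_facts p 1).2.1,
    (cConj_facts p 1).2.2]
  rw [show y + - -1 = y + 1 by ring, show y - -1 + ((1 : ℕ) : ZMod p) = y + 2 by
    push_cast; ring, sec_c, sec_c]
  have c1 : (y + 1 = 1) ↔ (y = 0) := by
    constructor
    · intro h; have := eq_sub_of_add_eq h; simpa using this
    · rintro rfl; ring
  have c2 : (y + 2 = 1) ↔ (y = -1) := by
    constructor
    · intro h; have := eq_sub_of_add_eq h; rw [this]; ring
    · rintro rfl; ring
  simp only [c1, c2]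
  by_cases hy0 : y = 0
  · subst hy0
    rw [if_pos rfl, if_neg hm10, if_pos rfl]
    rfl
  · by_cases hy1 : y = -1
    · subst hy1
      rw [if_neg (fun h => hm10 h.symm), if_pos rfl, if_neg (fun h => hm10 h.symm), if_pos rfl,
        cElt_def]
      group
    · rw [if_neg hy0, if_neg hy1, if_neg hy0, if_neg hy1, mul_inv_cancel]

lemma sec_d2 (p : ℕ) [Fact p.Prime] (hodd : Odd p) (y : ZMod p) :
    secA (d2Elt p) y = if y = -1 then cElt p else if y = 0 then (cElt p)⁻¹ else 1 := by
  have h10 := zmodOneNeZero p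
  have hm10 : (0 : ZMod p) ≠ -1 := fun h => h10 (by
    have := congrArg (fun z => z + 1) h
    simpa using this.symm)
  rw [d2Elt, secA_mul (cConj_facts p 1).1 (inv_mem (c_Sg p)), kOf_inv (c_Sg p),
    kOf_c, secA_inv (c_Sg p), kOf_c, (cConj_facts p 1).2.2]
  rw [show y + - -1 + ((1 : ℕ) : ZMod p) = y + 2 by push_cast; ring,
    show y - -1 = y + 1 by ring, sec_c, sec_c]
  have c1 : (y + 1 = 1) ↔ (y = 0) := by
    constructor
    · intro h; have := eq_sub_of_add_eq h; simpa using this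
    · rintro rfl; ring
  have c2 : (y + 2 = 1) ↔ (y = -1) := by
    constructor
    · intro h; have := eq_sub_of_add_eq h; rw [this]; ring
    · rintro rfl; ring
  simp only [c1, c2]
  by_cases hy1 : y = -1
  · subst hy1
    rw [if_pos rfl, if_neg (fun h => hm10 h.symm), if_pos rfl]
    rfl
  · by_cases hy0 : y = 0
    · subst hy0
      rw [if_neg hm10, if_pos rfl, if_neg hm10, if_pos rfl, cElt_def]
      group
    · rw [if_neg hy1, if_neg hy0, if_neg hy1, if_neg hy0, mul_inv_cancel]

/-! ### Fractality and conjugation stability -/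

lemma val_cast_eq (p : ℕ) [NeZero p] (z : ZMod p) : ((z.val : ℕ) : ZMod p) = z :=
  ZMod.natCast_rightInverse z

/-- Fractality: every element of `𝒢` occurs as the section at `x` of a first-level
stabilizer element of `𝒢`. -/
lemma frac (p : ℕ) [Fact p.Prime] (x : ZMod p) {h : ↥(AutT p)}
    (hh : h ∈ GGS p (constVec p)) :
    ∃ m, m ∈ GGS p (constVec p) ∧ m ∈ Sg p ∧ kOf m = 0 ∧ secA m x = h := by
  have h10 := zmodOneNeZero p
  induction hh using Subgroup.closure_induction with
  | mem f hf =>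
    simp only [Set.mem_insert_iff, Set.mem_singleton_iff] at hf
    rcases hf with rfl | rfl
    · -- realize `a` as a section of a conjugate of `b`
      set n : ℕ := (-1 - x).val with hn
      refine ⟨(aA p ^ n)⁻¹ * bA p (constVec p) * aA p ^ n,
        mul_mem (mul_mem (inv_mem (pow_mem (aA_mem_GGS p _) n)) (bA_mem_GGS p _))
          (pow_mem (aA_mem_GGS p _) n), (conjA_facts n (bA_facts p).1).1, ?_, ?_⟩
      · rw [(conjA_facts n (bA_facts p).1).2.1, (bA_facts p).2.1]
      · rw [(conjA_facts n (bA_facts p).1).2.2, (bA_facts p).2.2, hn, val_cast_eq,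
          show x + (-1 - x) = -1 by ring, if_neg (neg_ne_zero.mpr h10)]
    · set n : ℕ := (-x).val with hn
      refine ⟨(aA p ^ n)⁻¹ * bA p (constVec p) * aA p ^ n,
        mul_mem (mul_mem (inv_mem (pow_mem (aA_mem_GGS p _) n)) (bA_mem_GGS p _))
          (pow_mem (aA_mem_GGS p _) n), (conjA_facts n (bA_facts p).1).1, ?_, ?_⟩
      · rw [(conjA_facts n (bA_facts p).1).2.1, (bA_facts p).2.1]
      · rw [(conjA_facts n (bA_facts p).1).2.2, (bA_facts p).2.2, hn, val_cast_eq,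
          show x + -x = 0 by ring, if_pos rfl]
  | one => exact ⟨1, one_mem _, one_mem _, kOf_one, secA_one x⟩
  | mul f g _ _ ihf ihg =>
    obtain ⟨m₁, hm₁G, hm₁S, hk₁, hs₁⟩ := ihf
    obtain ⟨m₂, hm₂G, hm₂S, hk₂, hs₂⟩ := ihg
    refine ⟨m₁ * m₂, mul_mem hm₁G hm₂G, mul_mem hm₁S hm₂S, ?_, ?_⟩
    · rw [kOf_mul hm₁S hm₂S, hk₁, hk₂, add_zero]
    · rw [secA_mul hm₁S hm₂S, hk₂, add_zero, hs₁, hs₂]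
  | inv f _ ihf =>
    obtain ⟨m, hmG, hmS, hk, hs⟩ := ihf
    refine ⟨m⁻¹, inv_mem hmG, inv_mem hmS, ?_, ?_⟩
    · rw [kOf_inv hmS, hk, neg_zero]
    · rw [secA_inv hmS, hk, sub_zero, hs]

/-- Conjugation of `K'` by `𝒢`. -/
lemma normK' (p : ℕ) [NeZero p] {g k : ↥(AutT p)} (hg : g ∈ GGS p (constVec p))
    (hk : k ∈ ⁅Kgrp p, Kgrp p⁆) : g⁻¹ * k * g ∈ ⁅Kgrp p, Kgrp p⁆ := by
  rw [Subgroup.commutator_def] at hk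
  induction hk using Subgroup.closure_induction with
  | mem x hx =>
    obtain ⟨k₁, hk₁, k₂, hk₂, rfl⟩ := hx
    have h : g⁻¹ * ⁅k₁, k₂⁆ * g = ⁅g⁻¹ * k₁ * g, g⁻¹ * k₂ * g⁆ := by
      rw [commutatorElement_def, commutatorElement_def]; group
    rw [h]
    exact Subgroup.commutator_mem_commutator (normK p hg hk₁) (normK p hg hk₂)
  | one => simpa using one_mem _
  | mul x y _ _ hx hy =>
    have h : g⁻¹ * (x * y) * g = (g⁻¹ * x * g) * (g⁻¹ * y * g) := by group
    rw [h]; exact mul_mem hx hy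
  | inv x _ hx =>
    have h : g⁻¹ * x⁻¹ * g = (g⁻¹ * x * g)⁻¹ := by group
    rw [h]; exact inv_mem hx

/-- If a subgroup contains `c` and is stable under conjugation by `𝒢`, it contains `K`. -/
lemma K_le_of (p : ℕ) [NeZero p] (S : Subgroup ↥(AutT p)) (hc : cElt p ∈ S)
    (hnorm : ∀ h ∈ GGS p (constVec p), ∀ u ∈ S, h⁻¹ * u * h ∈ S) : Kgrp p ≤ S := by
  refine (Subgroup.closure_le _).mpr ?_
  rintro w ⟨i, hi, g, hg, rfl⟩
  have heq : g⁻¹ * ((aA p ^ i)⁻¹ * (bA p (constVec p) * (aA p)⁻¹) * aA p ^ i) * g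
      = (aA p ^ i * g)⁻¹ * cElt p * (aA p ^ i * g) := by
    rw [cElt_def]; group
  rw [heq]
  exact hnorm _ (mul_mem (pow_mem (aA_mem_GGS p _) i) hg) _ hc

/-- Conjugation action on sections of stabilized elements. -/
lemma secA_conj0 (p : ℕ) {g m : ↥(AutT p)} (hg : g ∈ Sg p) (hm : m ∈ Sg p)
    (hkg : kOf g = 0) (hkm : kOf m = 0) (x : ZMod p) :
    secA (m⁻¹ * g * m) x = (secA m x)⁻¹ * secA g x * secA m x := by
  have hmi := (Sg p).inv_mem hm
  rw [secA_mul (mul_mem hmi hg) hm, secA_mul hmi hg, hkm, add_zero, hkg, add_zero,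
    secA_inv hm, hkm, sub_zero]

/-- Sections of commutators of stabilized elements. -/
lemma secA_comm0 (p : ℕ) {e f : ↥(AutT p)} (he : e ∈ Sg p) (hf : f ∈ Sg p)
    (hke : kOf e = 0) (hkf : kOf f = 0) (y : ZMod p) :
    secA (e * f * e⁻¹ * f⁻¹) y = secA e y * secA f y * (secA e y)⁻¹ * (secA f y)⁻¹ := by
  have h := secA_commutator he hf y
  rw [commutatorElement_def] at h
  rw [h, hke, hkf, sub_zero, sub_zero]

/-! ### Part 3 : subdirectness of `ψ(K')` -/

/-- The projection of `K'` at the coordinate `x`. -/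
def Lsub (p : ℕ) [Fact p.Prime] (x : ZMod p) : Subgroup ↥(AutT p) where
  carrier := {u | ∃ g, g ∈ ⁅Kgrp p, Kgrp p⁆ ∧ secA g x = u}
  one_mem' := ⟨1, one_mem _, secA_one x⟩
  mul_mem' := by
    rintro u v ⟨g, hg, rfl⟩ ⟨h, hh, rfl⟩
    refine ⟨g * h, mul_mem hg hh, ?_⟩
    rw [secA_mul (K'_basic p hg).1 (K'_basic p hh).1, (K'_basic p hh).2, add_zero]
  inv_mem' := by
    rintro u ⟨g, hg, rfl⟩
    refine ⟨g⁻¹, inv_mem hg, ?_⟩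
    rw [secA_inv (K'_basic p hg).1, (K'_basic p hg).2, sub_zero]

lemma Lsub_norm (p : ℕ) [Fact p.Prime] (x : ZMod p) :
    ∀ h ∈ GGS p (constVec p), ∀ u ∈ Lsub p x, h⁻¹ * u * h ∈ Lsub p x := by
  rintro h hh u ⟨g, hg, rfl⟩
  obtain ⟨m, hmG, hmS, hkm, hsm⟩ := frac p x hh
  refine ⟨m⁻¹ * g * m, normK' p hmG hg, ?_⟩
  rw [secA_conj0 p (K'_basic p hg).1 hmS (K'_basic p hg).2 hkm, hsm]

lemma c_mem_Lsub (p : ℕ) [Fact p.Prime] (hodd : Odd p) (x : ZMod p) :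
    cElt p ∈ Lsub p x := by
  have h10 := zmodOneNeZero p
  have h20 := zmodTwoNeZero p hodd
  -- first at coordinate 0 via the commutator `[c, c^a]`
  have hc0 : cElt p ∈ Lsub p 0 := by
    refine ⟨⁅cElt p, cConj p 1⁆,
      Subgroup.commutator_mem_commutator (c_mem_K p) (cConj_mem_K p 1), ?_⟩
    rw [secA_commutator (c_Sg p) (cConj_facts p 1).1, kOf_c, (cConj_facts p 1).2.1,
      (cConj_facts p 1).2.2, (cConj_facts p 1).2.2]
    have h31 : (3 : ZMod p) ≠ 1 := fun h => h20 (by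
      rw [show (2 : ZMod p) = 3 - 1 by ring, h]; ring)
    have h21 : (2 : ZMod p) ≠ 1 := fun h => h10 (by
      rw [show (1 : ZMod p) = 2 - 1 by ring, h]; ring)
    rw [show (0 : ZMod p) - -1 = 1 by ring, show (1 : ZMod p) - -1 = 2 by ring,
      show (2 : ZMod p) + ((1 : ℕ) : ZMod p) = 3 by push_cast; ring,
      show (1 : ZMod p) + ((1 : ℕ) : ZMod p) = 2 by push_cast; ring, sec_c, sec_c, sec_c]
    rw [if_pos rfl, if_neg h31, if_neg h21]
    rw [cElt_def]
    group
  -- then shift to coordinate `x` by conjugating with a power of `a`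
  obtain ⟨g, hg, hs⟩ := hc0
  set n : ℕ := (0 - x).val with hn
  refine ⟨(aA p ^ n)⁻¹ * g * aA p ^ n, normK' p (pow_mem (aA_mem_GGS p _) n) hg, ?_⟩
  rw [(conjA_facts n (K'_basic p hg).1).2.2, hn, val_cast_eq,
    show x + (0 - x) = 0 by ring, hs]

lemma K_le_Lsub (p : ℕ) [Fact p.Prime] (hodd : Odd p) (x : ZMod p) :
    Kgrp p ≤ Lsub p x :=
  K_le_of p _ (c_mem_Lsub p hodd x) (Lsub_norm p x)

/-! ### Part 4 : branch structure -/

lemma comm_le_self {G : Type*} [Group G] (H : Subgroup G) : ⁅H, H⁆ ≤ H :=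
  Subgroup.commutator_le.mpr fun g hg h hh => by
    rw [commutatorElement_def]
    exact mul_mem (mul_mem (mul_mem hg hh) (inv_mem hg)) (inv_mem hh)

/-- Elements of `K ∩ st(1)` which are trivial at `x - 1`, projected at `x`. -/
def Rsub (p : ℕ) [NeZero p] (x : ZMod p) : Subgroup ↥(AutT p) where
  carrier := {u | ∃ g, g ∈ Kgrp p ∧ kOf g = 0 ∧ secA g (x - 1) = 1 ∧ secA g x = u}
  one_mem' := ⟨1, one_mem _, kOf_one, secA_one _, secA_one _⟩
  mul_mem' := by
    rintro u v ⟨g, hg, hkg, hg1, rfl⟩ ⟨h, hh, hkh, hh1, rfl⟩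
    have hgS := G_le_Sg p (K_le_G p hg)
    have hhS := G_le_Sg p (K_le_G p hh)
    refine ⟨g * h, mul_mem hg hh, by rw [kOf_mul hgS hhS, hkg, hkh, add_zero], ?_, ?_⟩
    · rw [secA_mul hgS hhS, hkh, add_zero, hg1, hh1, one_mul]
    · rw [secA_mul hgS hhS, hkh, add_zero]
  inv_mem' := by
    rintro u ⟨g, hg, hkg, hg1, rfl⟩
    have hgS := G_le_Sg p (K_le_G p hg)
    refine ⟨g⁻¹, inv_mem hg, by rw [kOf_inv hgS, hkg, neg_zero], ?_, ?_⟩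
    · rw [secA_inv hgS, hkg, sub_zero, hg1, inv_one]
    · rw [secA_inv hgS, hkg, sub_zero]

lemma Rsub_norm (p : ℕ) [Fact p.Prime] (x : ZMod p) :
    ∀ h ∈ GGS p (constVec p), ∀ u ∈ Rsub p x, h⁻¹ * u * h ∈ Rsub p x := by
  rintro h hh u ⟨g, hg, hkg, hg1, rfl⟩
  obtain ⟨m, hmG, hmS, hkm, hsm⟩ := frac p x hh
  have hgS := G_le_Sg p (K_le_G p hg)
  have hmem : m⁻¹ * g * m ∈ Kgrp p := normK p hmG hg
  have hmS' := G_le_Sg p (K_le_G p hmem)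
  refine ⟨m⁻¹ * g * m, hmem, ?_, ?_, ?_⟩
  · rw [kOf_mul (mul_mem (inv_mem hmS) hgS) hmS, kOf_mul (inv_mem hmS) hgS,
      kOf_inv hmS, hkm, hkg]
    ring
  · rw [secA_conj0 p hgS hmS hkg hkm, hg1]
    group
  · rw [secA_conj0 p hgS hmS hkg hkm, hsm]

lemma c_mem_Rsub (p : ℕ) [Fact p.Prime] (hodd : Odd p) (x : ZMod p) :
    cElt p ∈ Rsub p x := by
  have h10 := zmodOneNeZero p
  have h20 := zmodTwoNeZero p hodd
  set n : ℕ := (-1 - x).val with hn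
  have hcast : ((n : ℕ) : ZMod p) = -1 - x := by rw [hn, val_cast_eq]
  refine ⟨(aA p ^ n)⁻¹ * d2Elt p * aA p ^ n,
    normK p (pow_mem (aA_mem_GGS p _) n) (d2Elt_mem_K p), ?_, ?_, ?_⟩
  · rw [(conjA_facts n (d2Elt_Sg p)).2.1, kOf_d2]
  · rw [(conjA_facts n (d2Elt_Sg p)).2.2, hcast, show x - 1 + (-1 - x) = -2 by ring,
      sec_d2 p hodd]
    rw [if_neg (fun h => h10 (by rw [show (1 : ZMod p) = -1 - -2 by ring, h]; ring)),
      if_neg (fun h => h20 (by rw [show (2 : ZMod p) = -(-2) by ring, h]; ring))]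
  · rw [(conjA_facts n (d2Elt_Sg p)).2.2, hcast, show x + (-1 - x) = -1 by ring,
      sec_d2 p hodd, if_pos rfl]

lemma K_le_Rsub (p : ℕ) [Fact p.Prime] (hodd : Odd p) (x : ZMod p) :
    Kgrp p ≤ Rsub p x :=
  K_le_of p _ (c_mem_Rsub p hodd x) (Rsub_norm p x)

/-- Values at `x` of `K'`-elements supported only at `x`. -/
def Bpx (p : ℕ) [Fact p.Prime] (x : ZMod p) : Subgroup ↥(AutT p) where
  carrier := {u | ∃ e, e ∈ ⁅Kgrp p, Kgrp p⁆ ∧ (∀ y, y ≠ x → secA e y = 1) ∧ secA e x = u}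
  one_mem' := ⟨1, one_mem _, fun y _ => secA_one y, secA_one x⟩
  mul_mem' := by
    rintro u v ⟨e, he, he1, rfl⟩ ⟨f, hf, hf1, rfl⟩
    have heS := (K'_basic p he).1
    have hfS := (K'_basic p hf).1
    refine ⟨e * f, mul_mem he hf, fun y hy => ?_, ?_⟩
    · rw [secA_mul heS hfS, (K'_basic p hf).2, add_zero, he1 y hy, hf1 y hy, one_mul]
    · rw [secA_mul heS hfS, (K'_basic p hf).2, add_zero]
  inv_mem' := by
    rintro u ⟨e, he, he1, rfl⟩
    have heS := (K'_basic p he).1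
    refine ⟨e⁻¹, inv_mem he, fun y hy => ?_, ?_⟩
    · rw [secA_inv heS, (K'_basic p he).2, sub_zero, he1 y hy, inv_one]
    · rw [secA_inv heS, (K'_basic p he).2, sub_zero]

lemma Bpx_norm (p : ℕ) [Fact p.Prime] (x : ZMod p) :
    ∀ h ∈ GGS p (constVec p), ∀ u ∈ Bpx p x, h⁻¹ * u * h ∈ Bpx p x := by
  rintro h hh u ⟨e, he, he1, rfl⟩
  obtain ⟨m, hmG, hmS, hkm, hsm⟩ := frac p x hh
  have heS := (K'_basic p he).1
  refine ⟨m⁻¹ * e * m, normK' p hmG he, fun y hy => ?_, ?_⟩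
  · rw [secA_conj0 p heS hmS (K'_basic p he).2 hkm, he1 y hy]
    group
  · rw [secA_conj0 p heS hmS (K'_basic p he).2 hkm, hsm]

/-- The conjugated `d`-element, with sections `c` at `x` and `c⁻¹` at `x - 1`. -/
lemma dx_exists (p : ℕ) [Fact p.Prime] (hodd : Odd p) (x : ZMod p) :
    ∃ dx, dx ∈ Kgrp p ∧ dx ∈ Sg p ∧ kOf dx = 0 ∧ secA dx x = cElt p ∧
      ∀ y, y ≠ x → y ≠ x - 1 → secA dx y = 1 := by
  set n : ℕ := (-x).val with hn
  have hcast : ((n : ℕ) : ZMod p) = -x := by rw [hn, val_cast_eq]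
  refine ⟨(aA p ^ n)⁻¹ * dElt p * aA p ^ n,
    normK p (pow_mem (aA_mem_GGS p _) n) (dElt_mem_K p), (conjA_facts n (dElt_Sg p)).1,
    by rw [(conjA_facts n (dElt_Sg p)).2.1, kOf_d], ?_, ?_⟩
  · rw [(conjA_facts n (dElt_Sg p)).2.2, hcast, show x + -x = 0 by ring, sec_d p hodd,
      if_pos rfl]
  · intro y hy hy1
    rw [(conjA_facts n (dElt_Sg p)).2.2, hcast, sec_d p hodd]
    rw [if_neg (fun h => hy (by rw [show y = y + -x + x by ring, h]; ring)),
      if_neg (fun h => hy1 (by rw [show y = y + -x + x by ring, h]; ring))]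

/-- Base case: `[u, c] ∈ Bpx x` for every `u ∈ K`. -/
lemma Bpx_base (p : ℕ) [Fact p.Prime] (hodd : Odd p) (x : ZMod p) {u : ↥(AutT p)}
    (hu : u ∈ Kgrp p) : u * cElt p * u⁻¹ * (cElt p)⁻¹ ∈ Bpx p x := by
  obtain ⟨g, hgK, hkg, hg1, hgx⟩ := K_le_Rsub p hodd x hu
  obtain ⟨dx, hdK, hdS, hkd, hdx, hd1⟩ := dx_exists p hodd x
  have hgS := G_le_Sg p (K_le_G p hgK)
  refine ⟨g * dx * g⁻¹ * dx⁻¹, ?_, fun y hy => ?_, ?_⟩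
  · have : g * dx * g⁻¹ * dx⁻¹ = ⁅g, dx⁆ := (commutatorElement_def g dx).symm
    rw [this]
    exact Subgroup.commutator_mem_commutator hgK hdK
  · rw [secA_comm0 p hgS hdS hkg hkd]
    by_cases hy1 : y = x - 1
    · rw [hy1, hg1]
      group
    · rw [hd1 y hy hy1]
      group
  · rw [secA_comm0 p hgS hdS hkg hkd, hgx, hdx]

/-- `K' ≤ Bpx x` : every element of `K'` is the section at `x` of an
element of `K'` supported only at `x`. -/
lemma K'_le_Bpx (p : ℕ) [Fact p.Prime] (hodd : Odd p) (x : ZMod p) :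
    ⁅Kgrp p, Kgrp p⁆ ≤ Bpx p x := by
  rw [Subgroup.commutator_le]
  intro u hu w hw
  rw [commutatorElement_def]
  induction hw using Subgroup.closure_induction generalizing u with
  | mem w hwmem =>
    obtain ⟨i, hi, g, hg, rfl⟩ := hwmem
    set t : ↥(AutT p) := aA p ^ i * g with ht
    have htG : t ∈ GGS p (constVec p) := mul_mem (pow_mem (aA_mem_GGS p _) i) hg
    have heq : g⁻¹ * ((aA p ^ i)⁻¹ * (bA p (constVec p) * (aA p)⁻¹) * aA p ^ i) * g
        = t⁻¹ * cElt p * t := by rw [ht, cElt_def]; group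
    rw [heq]
    have hv : t * u * t⁻¹ ∈ Kgrp p := by
      have := normK p (inv_mem htG) hu
      rwa [inv_inv] at this
    have hbase := Bpx_base p hodd x hv
    have hfin := Bpx_norm p x t htG _ hbase
    have heq2 : t⁻¹ * (t * u * t⁻¹ * cElt p * (t * u * t⁻¹)⁻¹ * (cElt p)⁻¹) * t
        = u * (t⁻¹ * cElt p * t) * u⁻¹ * (t⁻¹ * cElt p * t)⁻¹ := by group
    rwa [heq2] at hfin
  | one =>
    have : u * 1 * u⁻¹ * 1⁻¹ = 1 := by group
    rw [this]; exact one_mem _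
  | mul w₁ w₂ hw₁ hw₂ ih₁ ih₂ =>
    have key : u * (w₁ * w₂) * u⁻¹ * (w₁ * w₂)⁻¹
        = (u * w₁ * u⁻¹ * w₁⁻¹) * (w₁ * (u * w₂ * u⁻¹ * w₂⁻¹) * w₁⁻¹) := by group
    rw [key]
    refine mul_mem (ih₁ u hu) ?_
    have := Bpx_norm p x w₁⁻¹ (inv_mem (K_le_G p hw₁)) _ (ih₂ u hu)
    rwa [inv_inv] at this
  | inv w hw ih =>
    have key : u * w⁻¹ * u⁻¹ * w⁻¹⁻¹
        = w⁻¹ * ((u * w * u⁻¹ * w⁻¹)⁻¹) * w := by group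
    rw [key]
    exact Bpx_norm p x w (K_le_G p hw) _ (inv_mem (ih u hu))

/-- Values at `x` of `K''`-elements supported only at `x`. -/
def BBx (p : ℕ) [Fact p.Prime] (x : ZMod p) : Subgroup ↥(AutT p) where
  carrier := {w | ∃ g, g ∈ ⁅⁅Kgrp p, Kgrp p⁆, ⁅Kgrp p, Kgrp p⁆⁆ ∧
      (∀ y, y ≠ x → secA g y = 1) ∧ secA g x = w}
  one_mem' := ⟨1, one_mem _, fun y _ => secA_one y, secA_one x⟩
  mul_mem' := by
    rintro u v ⟨e, he, he1, rfl⟩ ⟨f, hf, hf1, rfl⟩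
    have heS := (K'_basic p (comm_le_self _ he)).1
    have hfS := (K'_basic p (comm_le_self _ hf)).1
    have hkf := (K'_basic p (comm_le_self _ hf)).2
    refine ⟨e * f, mul_mem he hf, fun y hy => ?_, ?_⟩
    · rw [secA_mul heS hfS, hkf, add_zero, he1 y hy, hf1 y hy, one_mul]
    · rw [secA_mul heS hfS, hkf, add_zero]
  inv_mem' := by
    rintro u ⟨e, he, he1, rfl⟩
    have heS := (K'_basic p (comm_le_self _ he)).1
    have hke := (K'_basic p (comm_le_self _ he)).2
    refine ⟨e⁻¹, inv_mem he, fun y hy => ?_, ?_⟩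
    · rw [secA_inv heS, hke, sub_zero, he1 y hy, inv_one]
    · rw [secA_inv heS, hke, sub_zero]

/-- `γ₃(K) ≤ BBx x`. -/
lemma gamma3_le_BBx (p : ℕ) [Fact p.Prime] (hodd : Odd p) (x : ZMod p) :
    ⁅⁅Kgrp p, Kgrp p⁆, Kgrp p⁆ ≤ BBx p x := by
  rw [Subgroup.commutator_le]
  intro v hv k hk
  obtain ⟨e, heK', he1, hex⟩ := K'_le_Bpx p hodd x hv
  obtain ⟨f, hfK', hfx⟩ := K_le_Lsub p hodd x hk
  have heS := (K'_basic p heK').1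
  have hfS := (K'_basic p hfK').1
  refine ⟨e * f * e⁻¹ * f⁻¹, ?_, fun y hy => ?_, ?_⟩
  · have : e * f * e⁻¹ * f⁻¹ = ⁅e, f⁆ := (commutatorElement_def e f).symm
    rw [this]
    exact Subgroup.commutator_mem_commutator heK' hfK'
  · rw [secA_comm0 p heS hfS (K'_basic p heK').2 (K'_basic p hfK').2, he1 y hy]
    group
  · rw [secA_comm0 p heS hfS (K'_basic p heK').2 (K'_basic p hfK').2, hex, hfx,
      commutatorElement_def]

/-- **Lemma 3.2.** Let `𝒢` be the GGS-group with constant defining vector and `K` as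
above. Then `K' ≤ st(1)`, `ψ(K')` is a subdirect product of `K × ⋯ × K`, and
`ψ(K'') ≥ γ₃(K) × ⋯ × γ₃(K)`. -/
theorem Kgrp_derived_subdirect
    (p : ℕ) [Fact p.Prime] (hodd : Odd p) :
    (∀ g ∈ ⁅Kgrp p, Kgrp p⁆, FixesLevelOne p g) ∧
    (∀ g ∈ ⁅Kgrp p, Kgrp p⁆, ∀ x : ZMod p, sectionAt p g [x] ∈ Kgrp p) ∧
    (∀ x : ZMod p, ∀ k ∈ Kgrp p, ∃ g ∈ ⁅Kgrp p, Kgrp p⁆, sectionAt p g [x] = k) ∧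
    (∀ t : ZMod p → ↥(AutT p), (∀ x : ZMod p, t x ∈ ⁅⁅Kgrp p, Kgrp p⁆, Kgrp p⁆) →
      ∃ g ∈ ⁅⁅Kgrp p, Kgrp p⁆, ⁅Kgrp p, Kgrp p⁆⁆, FixesLevelOne p g ∧
        ∀ x : ZMod p, sectionAt p g [x] = t x) := by
  refine ⟨?_, ?_, ?_, ?_⟩
  · -- (1) K' ≤ st(1)
    intro g hg x
    have hb := K'_basic p hg
    have := sg_spec hb.1 x []
    rwa [hb.2, add_zero, autT_nil (secA g x)] at this
  · -- (2) sections of K' lie in K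
    intro g hg x
    exact secK' p hg x
  · -- (3) each projection of ψ(K') is all of K
    intro x k hk
    obtain ⟨g, hg, hs⟩ := K_le_Lsub p hodd x hk
    exact ⟨g, hg, hs⟩
  · -- (4) ψ(K'') ⊇ γ₃(K) × ⋯ × γ₃(K)
    intro t ht
    have key : ∀ s : Finset (ZMod p), ∃ g, g ∈ ⁅⁅Kgrp p, Kgrp p⁆, ⁅Kgrp p, Kgrp p⁆⁆ ∧
        ∀ x, secA g x = if x ∈ s then t x else 1 := by
      intro s
      induction s using Finset.induction_on with
      | empty => exact ⟨1, one_mem _, fun x => by rw [secA_one]; simp⟩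
      | @insert a s ha ih =>
        obtain ⟨g, hgm, hgs⟩ := ih
        obtain ⟨w, hwm, hw1, hwx⟩ := gamma3_le_BBx p hodd a (ht a)
        have hwS := (K'_basic p (comm_le_self _ hwm)).1
        have hgS := (K'_basic p (comm_le_self _ hgm)).1
        have hkg := (K'_basic p (comm_le_self _ hgm)).2
        refine ⟨w * g, mul_mem hwm hgm, fun x => ?_⟩
        rw [secA_mul hwS hgS, hkg, add_zero, hgs x]
        by_cases hxa : x = a
        · subst hxa
          rw [hwx, if_neg ha, if_pos (Finset.mem_insert_self x s), mul_one]
        · rw [hw1 x hxa, one_mul]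
          by_cases hxs : x ∈ s
          · rw [if_pos hxs, if_pos (Finset.mem_insert_of_mem hxs)]
          · rw [if_neg hxs, if_neg (fun h => hxs ((Finset.mem_insert.mp h).resolve_left hxa))]
    obtain ⟨g, hgK'', hsec⟩ := key Finset.univ
    refine ⟨g, hgK'', fun x => ?_, fun x => ?_⟩
    · have hb := K'_basic p (comm_le_self _ hgK'')
      have := sg_spec hb.1 x []
      rwa [hb.2, add_zero, autT_nil (secA g x)] at this
    · have := hsec x
      rw [if_pos (Finset.mem_univ x)] at this
      exact this
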